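/- Sufficient conditions for optimality: let Ω be an entanglement witness such that the vectors φ₀⊗χ₀, taken over all zeros (φ₀,χ₀) of Ω, span ℂ^(Fin Na × Fin Nb). Then Ω is optimal: for every entanglement witness Ω₀, every positive semidefinite Hermitian matrix P, and every p ∈ (0,1), if Ω = (1−p)·Ω₀ + p·P then P = 0. If moreover the partially conjugated vectors φ₀⊗χ₀*, taken over all zeros of Ω, also span ℂ^(Fin Na × Fin Nb), then Ω is nondecomposable optimal: for every entanglement witness Ω₀, all positive semidefinite Hermitian matrices ρ, σ, and every p ∈ (0,1), if Ω = (1−p)·Ω₀ + p·(ρ + σᴾ) then ρ = 0 and σ = 0. -/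

import Mathlib

open Matrix
open scoped ComplexOrder

noncomputable section

namespace EW

/-- Complex square matrices indexed by `Fin Na × Fin Nb`. -/
abbrev Mat (Na Nb : ℕ) := Matrix (Fin Na × Fin Nb) (Fin Na × Fin Nb) ℂ

/-- Kronecker product of vectors: `(φ⊗χ)_(i,j) = φ_i · χ_j`. -/
def kron {Na Nb : ℕ} (φ : Fin Na → ℂ) (χ : Fin Nb → ℂ) : Fin Na × Fin Nb → ℂ :=
  fun p => φ p.1 * χ p.2

/-- Sesquilinear pairing `xᴴ A y`. -/
def pair {n : Type*} [Fintype n] (A : Matrix n n ℂ) (x y : n → ℂ) : ℂ :=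
  star x ⬝ᵥ A.mulVec y

/-- The biquadratic form `f_A(φ,χ) = (φ⊗χ)ᴴ A (φ⊗χ)`. -/
def biquad {Na Nb : ℕ} (A : Mat Na Nb) (φ : Fin Na → ℂ) (χ : Fin Nb → ℂ) : ℂ :=
  pair A (kron φ χ) (kron φ χ)

/-- An entanglement witness: a Hermitian matrix whose biquadratic form is nonnegative. -/
def IsWitness {Na Nb : ℕ} (A : Mat Na Nb) : Prop :=
  A.IsHermitian ∧ ∀ φ χ, 0 ≤ biquad A φ χ

/-- `S₁°`, the set of trace-one entanglement witnesses. -/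
def witnessSet (Na Nb : ℕ) : Set (Mat Na Nb) :=
  { Ω | IsWitness Ω ∧ Ω.trace = 1 }

/-- A zero of a witness: a pair of nonzero vectors where the biquadratic form vanishes. -/
def IsZeroOf {Na Nb : ℕ} (Ω : Mat Na Nb) (φ₀ : Fin Na → ℂ) (χ₀ : Fin Nb → ℂ) : Prop :=
  φ₀ ≠ 0 ∧ χ₀ ≠ 0 ∧ biquad Ω φ₀ χ₀ = 0

/-- The Hessian form
`H_A(φ₀,χ₀;ξ,ζ) = Re[(ξ⊗χ₀)ᴴA(ξ⊗χ₀) + (φ₀⊗ζ)ᴴA(φ₀⊗ζ) + 2(φ₀⊗ζ)ᴴA(ξ⊗χ₀) + 2(φ₀⊗χ₀)ᴴA(ξ⊗ζ)]`. -/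
def hessForm {Na Nb : ℕ} (A : Mat Na Nb) (φ₀ : Fin Na → ℂ) (χ₀ : Fin Nb → ℂ)
    (ξ : Fin Na → ℂ) (ζ : Fin Nb → ℂ) : ℝ :=
  (pair A (kron ξ χ₀) (kron ξ χ₀) + pair A (kron φ₀ ζ) (kron φ₀ ζ)
    + 2 * pair A (kron φ₀ ζ) (kron ξ χ₀) + 2 * pair A (kron φ₀ χ₀) (kron ξ ζ)).re

/-- A Hessian zero of `Ω` at the zero `(φ₀,χ₀)`. -/
def IsHessianZeroAt {Na Nb : ℕ} (Ω : Mat Na Nb) (φ₀ : Fin Na → ℂ) (χ₀ : Fin Nb → ℂ)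
    (ξ : Fin Na → ℂ) (ζ : Fin Nb → ℂ) : Prop :=
  (ξ, ζ) ≠ (0, 0) ∧ star φ₀ ⬝ᵥ ξ = 0 ∧ star χ₀ ⬝ᵥ ζ = 0 ∧ hessForm Ω φ₀ χ₀ ξ ζ = 0

/-- A quadratic witness: a witness all of whose zeros have no Hessian zeros. -/
def IsQuadraticWitness {Na Nb : ℕ} (Ω : Mat Na Nb) : Prop :=
  IsWitness Ω ∧ ∀ φ₀ χ₀, IsZeroOf Ω φ₀ χ₀ → ∀ ξ ζ, ¬ IsHessianZeroAt Ω φ₀ χ₀ ξ ζ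

/-- Partial transpose with respect to the second factor. -/
def ptrans {Na Nb : ℕ} (A : Mat Na Nb) : Mat Na Nb :=
  fun p q => A (p.1, q.2) (q.1, p.2)

/-- Euclidean norm of a complex vector. -/
def enorm {n : Type*} [Fintype n] (x : n → ℂ) : ℝ :=
  Real.sqrt (star x ⬝ᵥ x).re

/-- Frobenius norm of a matrix. -/
def frobNorm {Na Nb : ℕ} (A : Mat Na Nb) : ℝ :=
  Real.sqrt (∑ i, ∑ j, ‖A i j‖ ^ 2)

/-- `S₁`, the set of separable states: the convex hull of normalized pure product states. -/
def sepSet (Na Nb : ℕ) : Set (Mat Na Nb) :=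
  convexHull ℝ { M | ∃ (φ : Fin Na → ℂ) (χ : Fin Nb → ℂ), enorm (kron φ χ) = 1 ∧
    M = Matrix.vecMulVec (kron φ χ) (star (kron φ χ)) }

/-- `Γ` satisfies the constraint system of the witness `Ω`. -/
def SatisfiesConstraints {Na Nb : ℕ} (Ω Γ : Mat Na Nb) : Prop :=
  (∀ φ₀ χ₀, IsZeroOf Ω φ₀ χ₀ →
    (∀ φ, pair Γ (kron φ χ₀) (kron φ₀ χ₀) = 0) ∧
    (∀ χ, pair Γ (kron φ₀ χ) (kron φ₀ χ₀) = 0)) ∧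
  (∀ φ₀ χ₀, IsZeroOf Ω φ₀ χ₀ → ∀ ξ ζ, IsHessianZeroAt Ω φ₀ χ₀ ξ ζ →
    ∀ ξ' ζ', star φ₀ ⬝ᵥ ξ' = 0 → star χ₀ ⬝ᵥ ζ' = 0 →
      hessForm Γ φ₀ χ₀ (ξ + ξ') (ζ + ζ') =
        hessForm Γ φ₀ χ₀ ξ ζ + hessForm Γ φ₀ χ₀ ξ' ζ') ∧
  (∀ φ₀ χ₀, IsZeroOf Ω φ₀ χ₀ → ∀ ξ ζ, IsHessianZeroAt Ω φ₀ χ₀ ξ ζ →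
    (pair Γ (kron φ₀ ζ) (kron ξ ζ) + pair Γ (kron ξ χ₀) (kron ξ ζ)).re = 0)

end EW

section Aux
open Matrix EW
open scoped ComplexOrder

lemma EW.pair_expand' {n : Type*} [Fintype n] (A : Matrix n n ℂ) (x : n → ℂ) :
    EW.pair A x x = ∑ r : n × n, star (x r.1) * (A r.1 r.2 * x r.2) := by
  rw [Fintype.sum_prod_type]
  simp only [EW.pair, Matrix.mulVec, dotProduct, Finset.mul_sum, Pi.star_apply]

lemma EW.pair_ptrans' {Na Nb : ℕ} (σ : EW.Mat Na Nb) (φ : Fin Na → ℂ) (χ : Fin Nb → ℂ) :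
    EW.pair (EW.ptrans σ) (EW.kron φ χ) (EW.kron φ χ) =
      EW.pair σ (EW.kron φ (star χ)) (EW.kron φ (star χ)) := by
  rw [EW.pair_expand', EW.pair_expand']
  refine Fintype.sum_equiv
    ⟨fun r => ((r.1.1, r.2.2), (r.2.1, r.1.2)),
     fun r => ((r.1.1, r.2.2), (r.2.1, r.1.2)), fun r => rfl, fun r => rfl⟩ _ _ ?_
  rintro ⟨⟨i, j⟩, ⟨k, l⟩⟩
  simp only [EW.kron, EW.ptrans, Pi.star_apply, star_mul', starRingEnd_apply,
    Equiv.coe_fn_mk, star_star]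
  ring

lemma EW.eq_zero_of_span' {n : Type*} [Fintype n] [DecidableEq n] (A : Matrix n n ℂ)
    (s : Set (n → ℂ)) (hspan : Submodule.span ℂ s = ⊤)
    (h : ∀ v ∈ s, A *ᵥ v = 0) : A = 0 := by
  have hker : ∀ v : n → ℂ, A.mulVecLin v = 0 := by
    intro v
    have hs : s ⊆ (LinearMap.ker A.mulVecLin : Set (n → ℂ)) := fun v hv => h v hv
    have := Submodule.span_le.mpr hs
    rw [hspan] at this
    exact this Submodule.mem_top
  ext i j
  have := congrFun (hker (Pi.single j 1)) i
  simpa [Matrix.mulVecLin_apply] using this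

lemma EW.pair_combo' {n : Type*} [Fintype n] (A B : Matrix n n ℂ) (r s : ℝ) (x : n → ℂ) :
    EW.pair (r • A + s • B) x x = r • EW.pair A x x + s • EW.pair B x x := by
  simp [EW.pair, Matrix.add_mulVec, Matrix.smul_mulVec, dotProduct_add,
    dotProduct_smul]

lemma EW.convex_zero' {p : ℝ} {a b : ℂ} (hp : 0 < p) (hp1 : p < 1) (ha : 0 ≤ a) (hb : 0 ≤ b)
    (h : (1 - p) • a + p • b = 0) : b = 0 := by
  rw [Complex.le_def] at ha hb
  simp only [Complex.zero_re, Complex.zero_im] at ha hb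
  rw [Complex.real_smul, Complex.real_smul, Complex.ext_iff] at h
  obtain ⟨h1, h2⟩ := h
  simp only [Complex.add_re, Complex.add_im, Complex.mul_re, Complex.mul_im,
    Complex.ofReal_re, Complex.ofReal_im, Complex.zero_re, Complex.zero_im] at h1 h2
  apply Complex.ext
  · simp only [Complex.zero_re]
    nlinarith [ha.1, hb.1, ha.2, hb.2]
  · simp only [Complex.zero_im]
    nlinarith [ha.2, hb.2]

end Aux


open EW
theorem spanning_implies_optimal (Na Nb : ℕ) (Ω : Mat Na Nb) (hΩ : IsWitness Ω)
    (hspan : Submodule.span ℂ { v : Fin Na × Fin Nb → ℂ |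
        ∃ φ₀ χ₀, IsZeroOf Ω φ₀ χ₀ ∧ v = kron φ₀ χ₀ } = ⊤) :
    (∀ Ω₀ : Mat Na Nb, IsWitness Ω₀ → ∀ P : Mat Na Nb, P.PosSemidef →
      ∀ p : ℝ, 0 < p → p < 1 → Ω = (1 - p) • Ω₀ + p • P → P = 0) ∧
    (Submodule.span ℂ { v : Fin Na × Fin Nb → ℂ |
        ∃ φ₀ χ₀, IsZeroOf Ω φ₀ χ₀ ∧ v = kron φ₀ (star χ₀) } = ⊤ →
      ∀ Ω₀ : Mat Na Nb, IsWitness Ω₀ → ∀ ρ σ : Mat Na Nb, ρ.PosSemidef → σ.PosSemidef →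
        ∀ p : ℝ, 0 < p → p < 1 → Ω = (1 - p) • Ω₀ + p • (ρ + ptrans σ) →
          ρ = 0 ∧ σ = 0) := by
  constructor
  · intro Ω₀ hΩ₀ P hP p hp hp1 hEq
    apply EW.eq_zero_of_span' P _ hspan
    rintro v ⟨φ₀, χ₀, hz, rfl⟩
    have h0 : biquad Ω φ₀ χ₀ = 0 := hz.2.2
    have hcomb : (1 - p) • biquad Ω₀ φ₀ χ₀ + p • pair P (kron φ₀ χ₀) (kron φ₀ χ₀) = 0 := by
      rw [← h0, hEq]
      exact (EW.pair_combo' _ _ _ _ _).symm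
    have hzero : pair P (kron φ₀ χ₀) (kron φ₀ χ₀) = 0 :=
      EW.convex_zero' hp hp1 (hΩ₀.2 φ₀ χ₀) (hP.dotProduct_mulVec_nonneg _) hcomb
    exact (hP.dotProduct_mulVec_zero_iff _).mp hzero
  · intro hspan2 Ω₀ hΩ₀ ρ σ hρ hσ p hp hp1 hEq
    have key : ∀ φ₀ χ₀, IsZeroOf Ω φ₀ χ₀ →
        pair ρ (kron φ₀ χ₀) (kron φ₀ χ₀) = 0 ∧
        pair σ (kron φ₀ (star χ₀)) (kron φ₀ (star χ₀)) = 0 := by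
      intro φ₀ χ₀ hz
      have h0 : biquad Ω φ₀ χ₀ = 0 := hz.2.2
      set x := kron φ₀ χ₀ with hx
      have hcomb : (1 - p) • biquad Ω₀ φ₀ χ₀ +
          p • pair (ρ + ptrans σ) x x = 0 := by
        rw [← h0, hEq]
        exact (EW.pair_combo' _ _ _ _ _).symm
      have hb : pair ρ x x + pair (ptrans σ) x x = pair (ρ + ptrans σ) x x := by
        simp [EW.pair, Matrix.add_mulVec, dotProduct_add]
      have hρ0 : (0:ℂ) ≤ pair ρ x x := hρ.dotProduct_mulVec_nonneg x
      have hσ0 : (0:ℂ) ≤ pair (ptrans σ) x x := by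
        rw [hx, EW.pair_ptrans']
        exact hσ.dotProduct_mulVec_nonneg _
      have hsum : pair ρ x x + pair (ptrans σ) x x = 0 := by
        rw [hb]
        exact EW.convex_zero' hp hp1 (hΩ₀.2 φ₀ χ₀) (hb ▸ add_nonneg hρ0 hσ0) hcomb
      have h12 := (add_eq_zero_iff_of_nonneg hρ0 hσ0).mp hsum
      exact ⟨h12.1, (EW.pair_ptrans' σ φ₀ χ₀) ▸ h12.2⟩
    constructor
    · apply EW.eq_zero_of_span' ρ _ hspan
      rintro v ⟨φ₀, χ₀, hz, rfl⟩
      exact (hρ.dotProduct_mulVec_zero_iff _).mp (key φ₀ χ₀ hz).1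
    · apply EW.eq_zero_of_span' σ _ hspan2
      rintro v ⟨φ₀, χ₀, hz, rfl⟩
      exact (hσ.dotProduct_mulVec_zero_iff _).mp (key φ₀ χ₀ hz).2
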